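/- For every natural number ℓ ≥ 1, the length of a longest trail in the complete graph K_ℓ with a loop at every vertex equals C(ℓ,2) + ℓ if ℓ is odd, and C(ℓ,2) + ℓ/2 + 1 if ℓ is even. -/

import Mathlib

def ed : List ℕ → List (Sym2 ℕ)
  | x :: y :: t => s(x, y) :: ed (y :: t)
  | _ => []

@[simp] lemma ed_nil : ed [] = [] := rfl
@[simp] lemma ed_single (x : ℕ) : ed [x] = [] := rfl
@[simp] lemma ed_cons_cons (x y : ℕ) (t : List ℕ) :
    ed (x :: y :: t) = s(x, y) :: ed (y :: t) := rfl

lemma ed_length : ∀ l : List ℕ, (ed l).length = l.length - 1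
  | [] => rfl
  | [_] => rfl
  | x :: y :: t => by
    rw [ed_cons_cons, List.length_cons, ed_length (y :: t)]
    simp

lemma ed_snoc : ∀ (l : List ℕ) (hl : l ≠ []) (x : ℕ),
    ed (l ++ [x]) = ed l ++ [s(l.getLast hl, x)]
  | [], hl, x => absurd rfl hl
  | [a], _, x => rfl
  | a :: b :: t, _, x => by
    rw [List.cons_append, List.cons_append, ed_cons_cons]
    rw [← List.cons_append, ed_snoc (b :: t) (List.cons_ne_nil _ _) x]
    simp [List.getLast]

lemma ed_append : ∀ (l1 : List ℕ) (x : ℕ) (l2 : List ℕ),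
    ed (l1 ++ x :: l2) = ed (l1 ++ [x]) ++ ed (x :: l2)
  | [], x, l2 => rfl
  | [a], x, l2 => rfl
  | a :: b :: t, x, l2 => by
    rw [List.cons_append, List.cons_append, ed_cons_cons, ← List.cons_append,
      ed_append (b :: t) x l2]
    simp

lemma ed_mem_endpoints : ∀ (l : List ℕ) (e : Sym2 ℕ), e ∈ ed l → ∀ z ∈ e, z ∈ l
  | [], e, he => by simp [ed] at he
  | [_], e, he => by simp [ed] at he
  | a :: b :: t, e, he => by
    rw [ed_cons_cons, List.mem_cons] at he
    rcases he with rfl | he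
    · intro z hz
      rw [Sym2.mem_iff] at hz
      rcases hz with rfl | rfl <;> simp
    · intro z hz
      have := ed_mem_endpoints (b :: t) e he z hz
      simp at this ⊢
      tauto

lemma ed_get? : ∀ (l : List ℕ) (i : ℕ), i + 1 < l.length →
    (ed l)[i]? = some s(l.getD i 0, l.getD (i + 1) 0)
  | [], i, h => by simp at h
  | [_], i, h => by simp at h
  | a :: b :: t, 0, h => by simp
  | a :: b :: t, i + 1, h => by
    rw [ed_cons_cons]
    have := ed_get? (b :: t) i (by simpa using h)
    simpa using this

def hub (a b j : ℕ) : ℕ := if j % 2 = 0 then a else b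

lemma hub_def (a b j : ℕ) : hub a b j = if j % 2 = 0 then a else b := rfl

lemma hub_or (a b j : ℕ) : hub a b j = a ∨ hub a b j = b := by
  unfold hub; split <;> simp

lemma hub_succ_pair (a b j : ℕ) :
    (hub a b j = a ∧ hub a b (j+1) = b) ∨ (hub a b j = b ∧ hub a b (j+1) = a) := by
  unfold hub
  rcases Nat.even_or_odd j with h | h
  · rw [Nat.even_iff] at h
    rw [if_pos h, if_neg (by omega)]
    exact Or.inl ⟨rfl, rfl⟩
  · rw [Nat.odd_iff] at h
    rw [if_neg (by omega), if_pos (by omega)]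
    exact Or.inr ⟨rfl, rfl⟩

lemma hub_two (a b j : ℕ) : hub a b (j + 2) = hub a b j := by
  unfold hub
  have : (j + 2) % 2 = j % 2 := by omega
  rw [this]

def zw (a b m : ℕ) : ℕ → List ℕ
  | 0 => []
  | n+1 => zw a b m n ++ [m+n+1, hub a b (m+n)]

lemma zw_zero (a b m : ℕ) : zw a b m 0 = [] := rfl
lemma zw_succ (a b m n : ℕ) : zw a b m (n+1) = zw a b m n ++ [m+n+1, hub a b (m+n)] := rfl

lemma zw_mem (a b m : ℕ) : ∀ n, ∀ x ∈ zw a b m n,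
    x = a ∨ x = b ∨ (m + 1 ≤ x ∧ x ≤ m + n)
  | 0, x, hx => by simp [zw] at hx
  | n+1, x, hx => by
    simp only [zw, List.mem_append, List.mem_cons] at hx
    rcases hx with hx | hx
    · rcases zw_mem a b m n x hx with h | h | h
      · exact Or.inl h
      · exact Or.inr (Or.inl h)
      · exact Or.inr (Or.inr ⟨h.1, by omega⟩)
    · rcases hx with rfl | hx
      · right; right; omega
      · simp at hx
        subst hx
        rcases hub_or a b (m+n) with h | h
        · exact Or.inl h
        · exact Or.inr (Or.inl h)

lemma zw_length (a b m : ℕ) : ∀ n, (zw a b m n).length = 2 * n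
  | 0 => rfl
  | n+1 => by simp [zw, zw_length a b m n]; omega

lemma ed_pair (x y : ℕ) : ed [x, y] = [s(x, y)] := rfl

lemma zw_spec (a b m : ℕ) (hab : a ≠ b) :
    ∀ n, m + n < a → m + n < b →
      (hub a b (m+1) :: zw a b m n).getLast? = some (hub a b (m+n+1)) ∧
      (∀ e ∈ ed (hub a b (m+1) :: zw a b m n),
        ∃ j, m ≤ j ∧ j < m + n ∧ (e = s(a, j+1) ∨ e = s(b, j+1))) ∧
      (ed (hub a b (m+1) :: zw a b m n)).Nodup := by
  intro n
  induction n with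
  | zero =>
    intro _ _
    refine ⟨by simp [zw_zero], ?_, ?_⟩ <;> simp [zw_zero, ed_single]
  | succ n ih =>
    intro ha hb
    obtain ⟨hlast, hmem, hnd⟩ := ih (by omega) (by omega)
    set W := hub a b (m+1) :: zw a b m n with hW
    have hne : W ≠ [] := List.cons_ne_nil _ _
    have hgl : W.getLast hne = hub a b (m+n+1) := by
      have h2 := List.getLast?_eq_getLast (l := W) hne
      rw [h2] at hlast; exact Option.some.inj hlast
    have hlist : hub a b (m+1) :: zw a b m (n+1) = (W ++ [m+n+1]) ++ [hub a b (m+n)] := by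
      rw [zw_succ, hW]; simp
    have hed1 : ed (W ++ [m+n+1]) = ed W ++ [s(hub a b (m+n+1), m+n+1)] := by
      rw [ed_snoc W hne, hgl]
    have hgl2 : (W ++ [m+n+1]).getLast (by simp) = m + n + 1 := by
      simp
    have hed : ed (hub a b (m+1) :: zw a b m (n+1)) =
        ed W ++ [s(hub a b (m+n+1), m+n+1), s(m+n+1, hub a b (m+n))] := by
      rw [hlist, ed_snoc _ (by simp), hgl2, hed1]; simp
    have hv : m + n + 1 < a ∧ m + n + 1 < b := ⟨by omega, by omega⟩
    refine ⟨?_, ?_, ?_⟩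
    · rw [hlist, List.getLast?_concat]
      have h3 : hub a b (m + (n+1) + 1) = hub a b (m+n) := by
        have he : m + (n+1) + 1 = (m + n) + 2 := by omega
        rw [he, hub_two]
      rw [h3]
    · rw [hed]
      intro e he
      rcases List.mem_append.mp he with he | he
      · obtain ⟨j, h1, h2, h3⟩ := hmem e he
        exact ⟨j, h1, by omega, h3⟩
      · simp only [List.mem_cons, List.not_mem_nil, or_false] at he
        rcases hub_succ_pair a b (m+n) with ⟨h1, h2⟩ | ⟨h1, h2⟩ <;>
          rcases he with rfl | rfl
        · exact ⟨m+n, by omega, by omega, Or.inr (by rw [h2, Sym2.eq_swap])⟩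
        · exact ⟨m+n, by omega, by omega, Or.inl (by rw [h1]; exact Sym2.eq_swap)⟩
        · exact ⟨m+n, by omega, by omega, Or.inl (by rw [h2, Sym2.eq_swap])⟩
        · exact ⟨m+n, by omega, by omega, Or.inr (by rw [h1]; exact Sym2.eq_swap)⟩
    · rw [hed, List.nodup_append']
      refine ⟨hnd, ?_, ?_⟩
      · simp only [List.nodup_cons, List.mem_singleton, List.nodup_nil, and_true]
        simp only [List.not_mem_nil, not_false_iff, and_true]
        rcases hub_succ_pair a b (m+n) with ⟨h1, h2⟩ | ⟨h1, h2⟩ <;> rw [h1, h2] <;>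
          · intro h
            rw [Sym2.eq_iff] at h
            rcases h with ⟨e1, e2⟩ | ⟨e1, e2⟩ <;> omega
      · intro e he he2
        obtain ⟨j, h1, h2, h3⟩ := hmem e he
        simp only [List.mem_cons, List.not_mem_nil, or_false] at he2
        rcases hub_or a b (m+n) with hh | hh <;> rcases hub_or a b (m+n+1) with hh2 | hh2 <;>
          rcases he2 with rfl | rfl <;> rw [hh2] at * <;> try rw [hh] at * <;> skip
        all_goals
          rcases h3 with h3 | h3 <;>
          · rw [Sym2.eq_iff] at h3
            rcases h3 with ⟨e1, e2⟩ | ⟨e1, e2⟩ <;> omega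


lemma odd_trail : ∀ k : ℕ, ∃ l : List ℕ,
    l.head? = some 0 ∧ l.getLast? = some 0 ∧ (∀ x ∈ l, x < 2*k+1) ∧
    (ed l).Nodup ∧ 2 * (ed l).length = (2*k+1) * (2*k+2) := by
  intro k
  induction k with
  | zero =>
    refine ⟨[0, 0], rfl, rfl, by simp, ?_, ?_⟩ <;> rw [ed_pair] <;> simp
  | succ k ih =>
    obtain ⟨l, hhead, hlast, hbound, hnd, hlen⟩ := ih
    set A := 2*k+1 with hA
    set B := 2*k+2 with hB
    clear_value A B
    have hAB : A ≠ B := by omega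
    obtain ⟨wlast, wmem, wnd⟩ := zw_spec A B 0 hAB (A - 1) (by omega) (by omega)
    set Z := zw A B 0 (A - 1) with hZ
    have hub1 : hub A B (0 + 1) = B := by rw [hub_def, if_neg (by omega)]
    have hubA : hub A B (0 + (A - 1) + 1) = B := by
      rw [hub_def, if_neg (by omega)]
    set W : List ℕ := hub A B (0+1) :: Z with hW
    have hWb : W = B :: Z := by rw [hW, hub1]
    have hWne : W ≠ [] := List.cons_ne_nil _ _
    have hwgl : W.getLast hWne = B := by
      have h2 := List.getLast?_eq_getLast (l := W) hWne
      rw [h2, hubA] at wlast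
      exact Option.some.inj wlast
    set rest : List ℕ := A :: A :: B :: B :: (Z ++ [0]) with hrest
    have hedWz : ed (W ++ [0]) = ed W ++ [s(B, 0)] := by
      rw [ed_snoc W hWne, hwgl]
    have hblk : ed (0 :: rest) = s(0,A) :: s(A,A) :: s(A,B) :: s(B,B) :: (ed W ++ [s(B,0)]) := by
      have h1 : (0:ℕ) :: rest = 0 :: A :: A :: B :: B :: (Z ++ [0]) := by rw [hrest]
      rw [h1, ed_cons_cons, ed_cons_cons, ed_cons_cons, ed_cons_cons,
        show (B :: (Z ++ [0])) = (B :: Z) ++ [0] from rfl, ← hWb, hedWz]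
    have wmem' : ∀ e ∈ ed W, ∃ j, 1 ≤ j ∧ j ≤ A - 1 ∧ (e = s(A, j) ∨ e = s(B, j)) := by
      intro e he
      obtain ⟨j, h1, h2, h3⟩ := wmem e he
      exact ⟨j+1, by omega, by omega, h3⟩
    have hnotin : ∀ u v : ℕ, (u = 0 ∨ u = A ∨ u = B) → (v = 0 ∨ v = A ∨ v = B) →
        s(u, v) ∉ ed W := by
      intro u v hu hv hc
      obtain ⟨j, h1, h2, h3⟩ := wmem' _ hc
      rcases h3 with h3 | h3 <;> rw [Sym2.eq_iff] at h3 <;> omega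
    have hndblk : (ed (0 :: rest)).Nodup := by
      rw [hblk]
      have hnd2 : (ed W ++ [s(B,0)]).Nodup := by
        rw [List.nodup_append']
        refine ⟨wnd, List.nodup_singleton _, ?_⟩
        intro e he he2
        simp only [List.mem_cons, List.not_mem_nil, or_false] at he2
        subst he2
        exact hnotin B 0 (by omega) (by omega) he
      rw [List.nodup_cons, List.nodup_cons, List.nodup_cons, List.nodup_cons]
      refine ⟨?_, ?_, ?_, ?_, hnd2⟩
      · intro hc
        simp only [List.mem_cons, List.mem_append, List.not_mem_nil, or_false] at hc
        rcases hc with h|h|h|h|h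
        · rw [Sym2.eq_iff] at h; omega
        · rw [Sym2.eq_iff] at h; omega
        · rw [Sym2.eq_iff] at h; omega
        · exact hnotin 0 A (by omega) (by omega) h
        · rw [Sym2.eq_iff] at h; omega
      · intro hc
        simp only [List.mem_cons, List.mem_append, List.not_mem_nil, or_false] at hc
        rcases hc with h|h|h|h
        · rw [Sym2.eq_iff] at h; omega
        · rw [Sym2.eq_iff] at h; omega
        · exact hnotin A A (by omega) (by omega) h
        · rw [Sym2.eq_iff] at h; omega
      · intro hc
        simp only [List.mem_cons, List.mem_append, List.not_mem_nil, or_false] at hc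
        rcases hc with h|h|h
        · rw [Sym2.eq_iff] at h; omega
        · exact hnotin A B (by omega) (by omega) h
        · rw [Sym2.eq_iff] at h; omega
      · intro hc
        simp only [List.mem_cons, List.mem_append, List.not_mem_nil, or_false] at hc
        rcases hc with h|h
        · exact hnotin B B (by omega) (by omega) h
        · rw [Sym2.eq_iff] at h; omega
    have hbig : ∀ e ∈ ed (0 :: rest), ∃ z ∈ e, A ≤ z := by
      rw [hblk]
      intro e he
      simp only [List.mem_cons, List.mem_append, List.not_mem_nil, or_false] at he
      rcases he with rfl|rfl|rfl|rfl|he|rfl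
      · exact ⟨A, by rw [Sym2.mem_iff]; tauto, by omega⟩
      · exact ⟨A, by rw [Sym2.mem_iff]; tauto, by omega⟩
      · exact ⟨A, by rw [Sym2.mem_iff]; tauto, by omega⟩
      · exact ⟨B, by rw [Sym2.mem_iff]; tauto, by omega⟩
      · obtain ⟨j, h1, h2, h3⟩ := wmem' _ he
        rcases h3 with rfl | rfl
        · exact ⟨A, by rw [Sym2.mem_iff]; tauto, by omega⟩
        · exact ⟨B, by rw [Sym2.mem_iff]; tauto, by omega⟩
      · exact ⟨B, by rw [Sym2.mem_iff]; tauto, by omega⟩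
    have hlne : l ≠ [] := by
      intro h; rw [h] at hlast; simp at hlast
    have hsplit : l.dropLast ++ [0] = l :=
      List.dropLast_append_getLast? 0 hlast
    have hedL : ed (l ++ rest) = ed l ++ ed (0 :: rest) := by
      conv_lhs => rw [← hsplit]
      rw [List.append_assoc, show [0] ++ rest = 0 :: rest from rfl,
        ed_append l.dropLast 0 rest, hsplit]
    have hZlen : Z.length = 2 * (A - 1) := zw_length A B 0 (A - 1)
    have hlenblk : (ed (0 :: rest)).length = 4*k + 5 := by
      rw [ed_length]
      rw [hrest]
      simp only [List.length_cons, List.length_append, List.length_singleton, List.length_nil, hZlen]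
      omega
    refine ⟨l ++ rest, ?_, ?_, ?_, ?_, ?_⟩
    · obtain ⟨t, rfl⟩ : ∃ t, l = 0 :: t := by
        cases l with
        | nil => exact absurd rfl hlne
        | cons x t => exact ⟨t, by injection hhead with h; rw [h]⟩
      rfl
    · rw [show l ++ rest = (l ++ (A :: A :: B :: B :: Z)) ++ [0] by simp [hrest],
        List.getLast?_concat]
    · intro x hx
      rcases List.mem_append.mp hx with hx | hx
      · have := hbound x hx; omega
      · rw [hrest] at hx
        simp only [List.mem_cons, List.mem_append, List.not_mem_nil, or_false] at hx
        rcases hx with rfl|rfl|rfl|rfl|hx|rfl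
        · omega
        · omega
        · omega
        · omega
        · rcases zw_mem A B 0 (A-1) x hx with h|h|h <;> omega
        · omega
    · rw [hedL, List.nodup_append']
      refine ⟨hnd, hndblk, ?_⟩
      intro e he hc
      obtain ⟨z, hz, hzA⟩ := hbig e hc
      have hzl := ed_mem_endpoints l e he z hz
      have := hbound z hzl
      omega
    · rw [hedL, List.length_append, hlenblk]
      have key : (2*(k+1)+1) * (2*(k+1)+2) = A * B + 2*(4*k+5) := by rw [hA, hB]; ring
      rw [key, ← hlen]
      omega

lemma even_trail : ∀ k : ℕ, ∃ l : List ℕ,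
    l.head? = some 0 ∧ l.getLast? = some 1 ∧ (∀ x ∈ l, x < 2*k+2) ∧
    (ed l).Nodup ∧ 2 * (ed l).length = (2*k+2) * (2*k+2) + 2 := by
  intro k
  induction k with
  | zero =>
    refine ⟨[0, 0, 1, 1], rfl, rfl, ?_, ?_, ?_⟩
    · intro x hx; simp only [List.mem_cons, List.not_mem_nil, or_false] at hx
      rcases hx with rfl|rfl|rfl|rfl <;> omega
    · rw [ed_cons_cons, ed_cons_cons, ed_pair]
      simp only [List.nodup_cons, List.mem_cons, List.not_mem_nil, or_false,
        List.nodup_nil, and_true, not_or, List.nodup_singleton]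
      refine ⟨⟨?_, ?_⟩, ?_⟩ <;> rw [Sym2.eq_iff] <;> decide
    · rw [ed_cons_cons, ed_cons_cons, ed_pair]
      rfl
  | succ k ih =>
    rcases Nat.eq_zero_or_pos k with rfl | hk
    · refine ⟨[0, 0, 1, 1, 2, 2, 0, 3, 3, 1], rfl, rfl, ?_, ?_, ?_⟩
      · intro x hx; simp only [List.mem_cons, List.not_mem_nil, or_false] at hx
        rcases hx with rfl|rfl|rfl|rfl|rfl|rfl|rfl|rfl|rfl|rfl <;> omega
      · rw [ed_cons_cons, ed_cons_cons, ed_cons_cons, ed_cons_cons, ed_cons_cons,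
          ed_cons_cons, ed_cons_cons, ed_cons_cons, ed_pair]
        simp only [List.nodup_cons, List.mem_cons, List.not_mem_nil, or_false,
          List.nodup_nil, and_true, not_or, List.nodup_singleton]
        refine ⟨⟨?_,?_,?_,?_,?_,?_,?_,?_⟩,⟨?_,?_,?_,?_,?_,?_,?_⟩,⟨?_,?_,?_,?_,?_,?_⟩,
          ⟨?_,?_,?_,?_,?_⟩,⟨?_,?_,?_,?_⟩,⟨?_,?_,?_⟩,⟨?_,?_⟩,?_⟩ <;>
          rw [Sym2.eq_iff] <;> decide
      · rw [ed_cons_cons, ed_cons_cons, ed_cons_cons, ed_cons_cons, ed_cons_cons,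
          ed_cons_cons, ed_cons_cons, ed_cons_cons, ed_pair]
        rfl
    · obtain ⟨l, hhead, hlast, hbound, hnd, hlen⟩ := ih
      set A := 2*k+2 with hA
      set B := 2*k+3 with hB
      clear_value A B
      have hAB : A ≠ B := by omega
      set n := 2*k-1 with hn
      obtain ⟨wlast, wmem, wnd⟩ := zw_spec A B 2 hAB n (by omega) (by omega)
      set Z := zw A B 2 n with hZ
      have hub3 : hub A B (2 + 1) = B := by rw [hub_def, if_neg (by omega)]
      have hubL : hub A B (2 + n + 1) = A := by
        rw [hub_def, if_pos (by omega)]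
      set W : List ℕ := hub A B (2+1) :: Z with hW
      have hWb : W = B :: Z := by rw [hW, hub3]
      have hWne : W ≠ [] := List.cons_ne_nil _ _
      have hwgl : W.getLast hWne = A := by
        have h2 := List.getLast?_eq_getLast (l := W) hWne
        rw [h2, hubL] at wlast
        exact Option.some.inj wlast
      set rest : List ℕ := A :: A :: 2 :: B :: B :: (Z ++ [0, B, 1]) with hrest
      have hedW1 : ed (W ++ [0]) = ed W ++ [s(A, 0)] := by
        rw [ed_snoc W hWne, hwgl]
      have hedW2 : ed ((W ++ [0]) ++ [B]) = ed W ++ [s(A,0), s(0,B)] := by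
        rw [ed_snoc (W ++ [0]) (by simp), hedW1]
        simp
      have hedW3 : ed (W ++ [0, B, 1]) = ed W ++ [s(A,0), s(0,B), s(B,1)] := by
        have hsh : W ++ [0, B, 1] = ((W ++ [0]) ++ [B]) ++ [1] := by simp
        rw [hsh, ed_snoc ((W ++ [0]) ++ [B]) (by simp), hedW2]
        have : ((W ++ [0]) ++ [B]).getLast (by simp) = B := by simp
        rw [this]
        simp
      have hblk : ed (1 :: rest) =
          s(1,A) :: s(A,A) :: s(A,2) :: s(2,B) :: s(B,B) :: (ed W ++ [s(A,0), s(0,B), s(B,1)]) := by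
        have h1 : (1:ℕ) :: rest = 1 :: A :: A :: 2 :: B :: B :: (Z ++ [0, B, 1]) := by rw [hrest]
        rw [h1, ed_cons_cons, ed_cons_cons, ed_cons_cons, ed_cons_cons, ed_cons_cons,
          show (B :: (Z ++ [0, B, 1])) = (B :: Z) ++ [0, B, 1] from rfl, ← hWb, hedW3]
      have wmem' : ∀ e ∈ ed W, ∃ j, 3 ≤ j ∧ j ≤ 2*k+1 ∧ (e = s(A, j) ∨ e = s(B, j)) := by
        intro e he
        obtain ⟨j, h1, h2, h3⟩ := wmem e he
        exact ⟨j+1, by omega, by omega, h3⟩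
      have hnotin : ∀ u v : ℕ, (u = 0 ∨ u = 1 ∨ u = 2 ∨ u = A ∨ u = B) →
          (v = 0 ∨ v = 1 ∨ v = 2 ∨ v = A ∨ v = B) → s(u, v) ∉ ed W := by
        intro u v hu hv hc
        obtain ⟨j, h1, h2, h3⟩ := wmem' _ hc
        rcases h3 with h3 | h3 <;> rw [Sym2.eq_iff] at h3 <;> omega
      have hndblk : (ed (1 :: rest)).Nodup := by
        rw [hblk]
        have hnd2 : (ed W ++ [s(A,0), s(0,B), s(B,1)]).Nodup := by
          rw [List.nodup_append']
          refine ⟨wnd, ?_, ?_⟩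
          · rw [List.nodup_cons, List.nodup_cons]
            refine ⟨?_, ?_, List.nodup_singleton _⟩
            · intro hc
              simp only [List.mem_cons, List.not_mem_nil, or_false] at hc
              rcases hc with h|h <;> rw [Sym2.eq_iff] at h <;> omega
            · intro hc
              simp only [List.mem_cons, List.not_mem_nil, or_false] at hc
              rw [Sym2.eq_iff] at hc
              omega
          · intro e he he2
            simp only [List.mem_cons, List.not_mem_nil, or_false] at he2
            rcases he2 with rfl|rfl|rfl
            · exact hnotin A 0 (by omega) (by omega) he
            · exact hnotin 0 B (by omega) (by omega) he
            · exact hnotin B 1 (by omega) (by omega) he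
        rw [List.nodup_cons, List.nodup_cons, List.nodup_cons, List.nodup_cons,
          List.nodup_cons]
        refine ⟨?_, ?_, ?_, ?_, ?_, hnd2⟩
        · intro hc
          simp only [List.mem_cons, List.mem_append, List.not_mem_nil, or_false] at hc
          rcases hc with h|h|h|h|h|h|h|h
          · rw [Sym2.eq_iff] at h; omega
          · rw [Sym2.eq_iff] at h; omega
          · rw [Sym2.eq_iff] at h; omega
          · rw [Sym2.eq_iff] at h; omega
          · exact hnotin 1 A (by omega) (by omega) h
          · rw [Sym2.eq_iff] at h; omega
          · rw [Sym2.eq_iff] at h; omega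
          · rw [Sym2.eq_iff] at h; omega
        · intro hc
          simp only [List.mem_cons, List.mem_append, List.not_mem_nil, or_false] at hc
          rcases hc with h|h|h|h|h|h|h
          · rw [Sym2.eq_iff] at h; omega
          · rw [Sym2.eq_iff] at h; omega
          · rw [Sym2.eq_iff] at h; omega
          · exact hnotin A A (by omega) (by omega) h
          · rw [Sym2.eq_iff] at h; omega
          · rw [Sym2.eq_iff] at h; omega
          · rw [Sym2.eq_iff] at h; omega
        · intro hc
          simp only [List.mem_cons, List.mem_append, List.not_mem_nil, or_false] at hc
          rcases hc with h|h|h|h|h|h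
          · rw [Sym2.eq_iff] at h; omega
          · rw [Sym2.eq_iff] at h; omega
          · exact hnotin A 2 (by omega) (by omega) h
          · rw [Sym2.eq_iff] at h; omega
          · rw [Sym2.eq_iff] at h; omega
          · rw [Sym2.eq_iff] at h; omega
        · intro hc
          simp only [List.mem_cons, List.mem_append, List.not_mem_nil, or_false] at hc
          rcases hc with h|h|h|h|h
          · rw [Sym2.eq_iff] at h; omega
          · exact hnotin 2 B (by omega) (by omega) h
          · rw [Sym2.eq_iff] at h; omega
          · rw [Sym2.eq_iff] at h; omega
          · rw [Sym2.eq_iff] at h; omega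
        · intro hc
          simp only [List.mem_cons, List.mem_append, List.not_mem_nil, or_false] at hc
          rcases hc with h|h|h|h
          · exact hnotin B B (by omega) (by omega) h
          · rw [Sym2.eq_iff] at h; omega
          · rw [Sym2.eq_iff] at h; omega
          · rw [Sym2.eq_iff] at h; omega
      have hbig : ∀ e ∈ ed (1 :: rest), ∃ z ∈ e, A ≤ z := by
        rw [hblk]
        intro e he
        simp only [List.mem_cons, List.mem_append, List.not_mem_nil, or_false] at he
        rcases he with rfl|rfl|rfl|rfl|rfl|he|rfl|rfl|rfl
        · exact ⟨A, by rw [Sym2.mem_iff]; tauto, by omega⟩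
        · exact ⟨A, by rw [Sym2.mem_iff]; tauto, by omega⟩
        · exact ⟨A, by rw [Sym2.mem_iff]; tauto, by omega⟩
        · exact ⟨B, by rw [Sym2.mem_iff]; tauto, by omega⟩
        · exact ⟨B, by rw [Sym2.mem_iff]; tauto, by omega⟩
        · obtain ⟨j, h1, h2, h3⟩ := wmem' _ he
          rcases h3 with rfl | rfl
          · exact ⟨A, by rw [Sym2.mem_iff]; tauto, by omega⟩
          · exact ⟨B, by rw [Sym2.mem_iff]; tauto, by omega⟩
        · exact ⟨A, by rw [Sym2.mem_iff]; tauto, by omega⟩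
        · exact ⟨B, by rw [Sym2.mem_iff]; tauto, by omega⟩
        · exact ⟨B, by rw [Sym2.mem_iff]; tauto, by omega⟩
      have hlne : l ≠ [] := by
        intro h; rw [h] at hlast; simp at hlast
      have hsplit : l.dropLast ++ [1] = l :=
        List.dropLast_append_getLast? 1 hlast
      have hedL : ed (l ++ rest) = ed l ++ ed (1 :: rest) := by
        conv_lhs => rw [← hsplit]
        rw [List.append_assoc, show [1] ++ rest = 1 :: rest from rfl,
          ed_append l.dropLast 1 rest, hsplit]
      have hZlen : Z.length = 2 * n := zw_length A B 2 n
      have hlenblk : (ed (1 :: rest)).length = 4*k + 6 := by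
        rw [ed_length]
        rw [hrest]
        simp only [List.length_cons, List.length_append, List.length_singleton,
          List.length_nil, hZlen]
        omega
      refine ⟨l ++ rest, ?_, ?_, ?_, ?_, ?_⟩
      · obtain ⟨t, rfl⟩ : ∃ t, l = 0 :: t := by
          cases l with
          | nil => exact absurd rfl hlne
          | cons x t => exact ⟨t, by injection hhead with h; rw [h]⟩
        rfl
      · rw [show l ++ rest = (l ++ (A :: A :: 2 :: B :: B :: (Z ++ [0, B]))) ++ [1] by
          simp [hrest], List.getLast?_concat]
      · intro x hx
        rcases List.mem_append.mp hx with hx | hx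
        · have := hbound x hx; omega
        · rw [hrest] at hx
          simp only [List.mem_cons, List.mem_append, List.not_mem_nil, or_false] at hx
          rcases hx with rfl|rfl|rfl|rfl|rfl|hx|rfl|rfl|rfl
          · omega
          · omega
          · omega
          · omega
          · omega
          · rcases zw_mem A B 2 n x hx with h|h|h <;> omega
          · omega
          · omega
          · omega
      · rw [hedL, List.nodup_append']
        refine ⟨hnd, hndblk, ?_⟩
        intro e he hc
        obtain ⟨z, hz, hzA⟩ := hbig e hc
        have hzl := ed_mem_endpoints l e he z hz
        have := hbound z hzl
        omega
      · rw [hedL, List.length_append, hlenblk]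
        have key : (2*(k+1)+2) * (2*(k+1)+2) + 2 = (A * A + 2) + 2*(4*k+6) := by
          rw [hA]; ring
        rw [key, ← hlen]
        · omega


def cnt {α : Type*} [DecidableEq α] (x : α) : Sym2 α → ℕ :=
  Sym2.lift ⟨fun u w => (if u = x then 1 else 0) + (if w = x then 1 else 0),
    fun u w => by ring⟩

@[simp] lemma cnt_mk {α : Type*} [DecidableEq α] (x u w : α) :
    cnt x s(u, w) = (if u = x then 1 else 0) + (if w = x then 1 else 0) := rfl

lemma cnt_eq_zero {α : Type*} [DecidableEq α] (x : α) (e : Sym2 α) (h : x ∉ e) :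
    cnt x e = 0 := by
  induction e using Sym2.ind with
  | _ u w =>
    rw [Sym2.mem_iff] at h
    push_neg at h
    simp [cnt_mk, Ne.symm h.1, Ne.symm h.2]

lemma upper_even (ℓ m : ℕ) (hℓ : 1 ≤ ℓ) (hev : ℓ % 2 = 0) (v : ℕ → Fin ℓ)
    (hv : ∀ i j : ℕ, i < m → j < m → s(v i, v (i + 1)) = s(v j, v (j + 1)) → i = j) :
    2 * m ≤ ℓ * ℓ + 2 := by
  classical
  set f : ℕ → Sym2 (Fin ℓ) := fun i => s(v i, v (i + 1)) with hf
  set E : Finset (Sym2 (Fin ℓ)) := (Finset.range m).image f with hE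
  have hcard : E.card = m := by
    rw [hE, Finset.card_image_of_injOn, Finset.card_range]
    intro i hi j hj hij
    exact hv i j (Finset.mem_range.mp hi) (Finset.mem_range.mp hj) hij
  have hmN : m ≤ Fintype.card (Sym2 (Fin ℓ)) := by
    rw [← hcard, ← Finset.card_univ]
    exact Finset.card_le_card (Finset.subset_univ E)
  set N := Fintype.card (Sym2 (Fin ℓ)) with hN
  have h2N : 2 * N = ℓ * (ℓ + 1) := by
    rw [hN, Sym2.card, Fintype.card_fin, Nat.choose_two_right]
    have h1 : ℓ + 1 - 1 = ℓ := rfl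
    rw [h1, mul_comm (ℓ+1) ℓ]
    have h2 : 2 ∣ ℓ * (ℓ + 1) := (Nat.even_mul_succ_self ℓ).two_dvd
    exact Nat.mul_div_cancel' h2
  -- degree parity
  have hdeg : ∀ x : Fin ℓ, x ≠ v 0 → x ≠ v m → ∃ e ∉ E, x ∈ e := by
    intro x hx0 hxm
    by_contra hcon
    push_neg at hcon
    -- incident edges
    set incid : Finset (Sym2 (Fin ℓ)) := Finset.univ.image (fun y : Fin ℓ => s(x, y))
      with hincid
    have hsub : incid ⊆ E := by
      intro e he
      rw [hincid, Finset.mem_image] at he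
      obtain ⟨y, _, rfl⟩ := he
      by_contra hne
      exact hcon _ hne (Sym2.mem_mk_left x y)
    have hsum_incid : ∑ e ∈ incid, cnt x e = ℓ + 1 := by
      rw [hincid, Finset.sum_image]
      · have : ∀ y : Fin ℓ, cnt x s(x, y) = 1 + (if y = x then 1 else 0) := by
          intro y; simp [cnt_mk]
        rw [Finset.sum_congr rfl (fun y _ => this y)]
        rw [Finset.sum_add_distrib, Finset.sum_const, Finset.card_univ, Fintype.card_fin]
        rw [Finset.sum_boole]
        simp [Finset.filter_eq']
      · intro y _ y' _ h
        rw [Sym2.eq_iff] at h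
        rcases h with ⟨_, h⟩ | ⟨h1, h2⟩
        · exact h
        · rw [h2, ← h1]
    have hdegE : ∑ e ∈ E, cnt x e = ℓ + 1 := by
      rw [← hsum_incid]
      symm
      apply Finset.sum_subset hsub
      intro e _ hne
      apply cnt_eq_zero
      intro hxe
      apply hne
      rw [Sym2.mem_iff_exists] at hxe
      obtain ⟨y, rfl⟩ := hxe
      rw [hincid, Finset.mem_image]
      exact ⟨y, Finset.mem_univ y, rfl⟩
    -- parity computation
    set F : ℕ → ℕ := fun t => if v t = x then 1 else 0 with hF
    have hdegsum : ∑ e ∈ E, cnt x e =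
        (∑ i ∈ Finset.range m, F i) + (∑ i ∈ Finset.range m, F (i+1)) := by
      rw [hE, Finset.sum_image]
      · rw [← Finset.sum_add_distrib]
        apply Finset.sum_congr rfl
        intro i _
        simp [hf, hF, cnt_mk]
      · intro i hi j hj hij
        exact hv i j (Finset.mem_range.mp hi) (Finset.mem_range.mp hj) hij
    have hshift : (∑ i ∈ Finset.range m, F (i+1)) + F 0 = (∑ i ∈ Finset.range m, F i) + F m := by
      have h1 := Finset.sum_range_succ F m
      have h2 := Finset.sum_range_succ' F m
      omega
    have hF0 : F 0 = 0 := by rw [hF]; simp [Ne.symm hx0]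
    have hFm : F m = 0 := by rw [hF]; simp [Ne.symm hxm]
    rw [hdegE] at hdegsum
    omega
  -- counting missing edges
  set M : Finset (Sym2 (Fin ℓ)) := Finset.univ \ E with hM
  have hMcard : M.card = N - m := by
    rw [hM, Finset.card_sdiff_of_subset (Finset.subset_univ E), Finset.card_univ, hcard]
  set G : Finset (Fin ℓ) := Finset.univ \ insert (v 0) {v m} with hG
  have hGcard : ℓ - 2 ≤ G.card := by
    rw [hG, Finset.card_sdiff_of_subset (Finset.subset_univ _), Finset.card_univ, Fintype.card_fin]
    have := Finset.card_insert_le (v 0) ({v m} : Finset (Fin ℓ))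
    simp only [Finset.card_singleton] at this
    omega
  have hGsub : G ⊆ M.biUnion (fun e => Finset.univ.filter (fun x => x ∈ e)) := by
    intro x hx
    rw [hG, Finset.mem_sdiff, Finset.mem_insert, Finset.mem_singleton] at hx
    push_neg at hx
    obtain ⟨e, he, hxe⟩ := hdeg x hx.2.1 hx.2.2
    rw [Finset.mem_biUnion]
    exact ⟨e, by rw [hM, Finset.mem_sdiff]; exact ⟨Finset.mem_univ e, he⟩,
      by rw [Finset.mem_filter]; exact ⟨Finset.mem_univ x, hxe⟩⟩
  have hfil : ∀ e : Sym2 (Fin ℓ), (Finset.univ.filter (fun x => x ∈ e)).card ≤ 2 := by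
    intro e
    induction e using Sym2.ind with
    | _ u w =>
      have hsub2 : Finset.univ.filter (fun x => x ∈ s(u, w)) ⊆ insert u {w} := by
        intro x hx
        rw [Finset.mem_filter, Sym2.mem_iff] at hx
        rw [Finset.mem_insert, Finset.mem_singleton]
        exact hx.2
      calc (Finset.univ.filter (fun x => x ∈ s(u, w))).card
          ≤ (insert u ({w} : Finset (Fin ℓ))).card := Finset.card_le_card hsub2
        _ ≤ 2 := by
            have := Finset.card_insert_le u ({w} : Finset (Fin ℓ))
            simp only [Finset.card_singleton] at this
            omega
  have hGle : G.card ≤ 2 * M.card := by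
    calc G.card ≤ (M.biUnion (fun e => Finset.univ.filter (fun x => x ∈ e))).card :=
          Finset.card_le_card hGsub
      _ ≤ ∑ e ∈ M, (Finset.univ.filter (fun x => x ∈ e)).card := Finset.card_biUnion_le
      _ ≤ ∑ _e ∈ M, 2 := Finset.sum_le_sum (fun e _ => hfil e)
      _ = 2 * M.card := by rw [Finset.sum_const, smul_eq_mul, mul_comm]
  rw [hMcard] at hGle
  obtain ⟨Q, hQ⟩ : ∃ Q, ℓ * ℓ = Q := ⟨_, rfl⟩
  have h2N' : 2 * N = Q + ℓ := by rw [← hQ]; rw [h2N]; ring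
  omega

lemma two_mul_card_sym2 (ℓ : ℕ) : 2 * Fintype.card (Sym2 (Fin ℓ)) = ℓ * (ℓ + 1) := by
  rw [Sym2.card, Fintype.card_fin, Nat.choose_two_right]
  have h1 : ℓ + 1 - 1 = ℓ := rfl
  rw [h1, mul_comm (ℓ+1) ℓ]
  exact Nat.mul_div_cancel' (Nat.even_mul_succ_self ℓ).two_dvd

lemma two_choose (ℓ : ℕ) : 2 * Nat.choose ℓ 2 = ℓ * (ℓ - 1) := by
  rw [Nat.choose_two_right]
  apply Nat.mul_div_cancel'
  rcases Nat.eq_zero_or_pos ℓ with rfl | h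
  · simp
  · obtain ⟨j, rfl⟩ : ∃ j, ℓ = j + 1 := ⟨ℓ - 1, by omega⟩
    have h2 : (j + 1) * (j + 1 - 1) = j * (j + 1) := by
      have : j + 1 - 1 = j := rfl
      rw [this]; ring
    rw [h2]
    exact (Nat.even_mul_succ_self j).two_dvd

lemma upper_all (ℓ m : ℕ) (v : ℕ → Fin ℓ)
    (hv : ∀ i j : ℕ, i < m → j < m → s(v i, v (i + 1)) = s(v j, v (j + 1)) → i = j) :
    2 * m ≤ ℓ * (ℓ + 1) := by
  have hinj : Function.Injective (fun i : Fin m => s(v i.val, v (i.val + 1))) := by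
    intro i j h
    exact Fin.ext (hv i.val j.val i.isLt j.isLt h)
  have hc := Fintype.card_le_of_injective _ hinj
  rw [Fintype.card_fin] at hc
  have := two_mul_card_sym2 ℓ
  omega

lemma trail_exists (ℓ : ℕ) (hℓ : 1 ≤ ℓ) (l : List ℕ) (m : ℕ)
    (hbound : ∀ x ∈ l, x < ℓ) (hnd : (ed l).Nodup) (hlen : (ed l).length = m)
    (hne : l ≠ []) :
    ∃ v : ℕ → Fin ℓ, ∀ i j : ℕ, i < m → j < m →
      s(v i, v (i + 1)) = s(v j, v (j + 1)) → i = j := by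
  have hlength : l.length = m + 1 := by
    have h1 := ed_length l
    have h2 : l.length ≠ 0 := fun h => hne (List.length_eq_zero_iff.mp h)
    omega
  refine ⟨fun i => ⟨l.getD i 0 % ℓ, Nat.mod_lt _ hℓ⟩, ?_⟩
  intro i j hi hj hij
  have hval : ∀ t, t < m + 1 → l.getD t 0 % ℓ = l.getD t 0 := by
    intro t ht
    apply Nat.mod_eq_of_lt
    apply hbound
    rw [List.getD_eq_getElem l 0 (by omega)]
    exact List.getElem_mem _
  have hmap := congrArg (Sym2.map (Fin.val)) hij
  rw [Sym2.map_pair_eq, Sym2.map_pair_eq] at hmap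
  simp only [Fin.val_mk] at hmap
  rw [hval i (by omega), hval (i+1) (by omega), hval j (by omega),
    hval (j+1) (by omega)] at hmap
  have hgi := ed_get? l i (by omega)
  have hgj := ed_get? l j (by omega)
  apply (List.getElem?_inj (by rw [ed_length]; omega) hnd).mp
  rw [hgi, hgj, hmap]

theorem stmt_17 (ℓ : ℕ) (hℓ : 1 ≤ ℓ) :
    IsGreatest
      {m : ℕ | ∃ v : ℕ → Fin ℓ,
        ∀ i j : ℕ, i < m → j < m → s(v i, v (i + 1)) = s(v j, v (j + 1)) → i = j}
      (if Odd ℓ then Nat.choose ℓ 2 + ℓ else Nat.choose ℓ 2 + ℓ / 2 + 1) := by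
  constructor
  · -- membership
    rcases Nat.even_or_odd ℓ with hev | hodd
    · rw [if_neg (Nat.not_odd_iff_even.mpr hev)]
      obtain ⟨k, rfl⟩ : ∃ k, ℓ = 2*k+2 := by
        rcases hev with ⟨t, ht⟩; exact ⟨t - 1, by omega⟩
      obtain ⟨l, hh, hl, hb, hnd, hlen⟩ := even_trail k
      have hne : l ≠ [] := by intro h; rw [h] at hh; simp at hh
      refine trail_exists _ hℓ l _ hb hnd ?_ hne
      have e1 : 2 * Nat.choose (2*k+2) 2 = (2*k+2)*(2*k+1) := by
        rw [two_choose]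
        congr 1
      have e2 : (2*k+2)*(2*k+2) + 2 = (2*k+2)*(2*k+1) + (2*k+4) := by ring
      rw [e2, ← e1] at hlen
      omega
    · rw [if_pos hodd]
      obtain ⟨k, rfl⟩ : ∃ k, ℓ = 2*k+1 := by
        rcases hodd with ⟨t, ht⟩; exact ⟨t, by omega⟩
      obtain ⟨l, hh, hl, hb, hnd, hlen⟩ := odd_trail k
      have hne : l ≠ [] := by intro h; rw [h] at hh; simp at hh
      refine trail_exists _ hℓ l _ hb hnd ?_ hne
      have e1 : 2 * Nat.choose (2*k+1) 2 = (2*k+1)*(2*k) := by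
        rw [two_choose]
        congr 1
      have e2 : (2*k+1)*(2*k+2) = (2*k+1)*(2*k) + 2*(2*k+1) := by ring
      rw [e2, ← e1] at hlen
      omega
  · -- upper bound
    intro m hm
    obtain ⟨v, hv⟩ := hm
    obtain ⟨j, rfl⟩ : ∃ j, ℓ = j + 1 := ⟨ℓ - 1, by omega⟩
    rcases Nat.even_or_odd (j+1) with hev | hodd
    · rw [if_neg (Nat.not_odd_iff_even.mpr hev)]
      have h1 := upper_even (j+1) m hℓ (Nat.even_iff.mp hev) v hv
      have e1 : 2 * Nat.choose (j+1) 2 = (j+1)*j := by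
        rw [two_choose]; congr 1
      have e3 : (j+1)*(j+1) + 2 = (j+1)*j + (j+1) + 2 := by ring
      rw [e3, ← e1] at h1
      have hev2 : (j+1) % 2 = 0 := Nat.even_iff.mp hev
      omega
    · rw [if_pos hodd]
      have h1 := upper_all (j+1) m v hv
      have e1 : 2 * Nat.choose (j+1) 2 = (j+1)*j := by
        rw [two_choose]; congr 1
      have e4 : (j+1)*(j+1+1) = (j+1)*j + 2*(j+1) := by ring
      rw [e4, ← e1] at h1
      omega
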